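/- Let [φ] ∈ (ℂ/ℤ)^n have toric degree r ≥ 1 and admit toric vectors θ^(1),…,θ^(r) with toric coefficients α_1,…,α_r ∈ ℂ that are rationally dependent with 1. Then there exist toric vectors η^(1),…,η^(r) for [φ] with toric coefficients β_1,…,β_r such that β_1 = 1/m for some integer m ≥ 2 with gcd(m, η^(1)_1, …, η^(1)_n) = 1, and β_2,…,β_r,1 are rationally independent. -/

import Mathlib

open scoped BigOperators
open Complex

noncomputable section

/-- `φ` (a representative of a class in `(ℂ/ℤ)^n`) is represented by toric
coefficients `α` and toric vectors `θ`, i.e. `[φ] = [∑ k, α k • θ k]`. -/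
def IsToricRep {n r : ℕ} (φ : Fin n → ℂ) (α : Fin r → ℂ) (θ : Fin r → Fin n → ℤ) : Prop :=
  ∀ j, ∃ m : ℤ, φ j - ∑ k, α k * (θ k j : ℂ) = (m : ℂ)

/-- `[φ]` has toric degree `r`: `r` is the minimal length of a toric representation. -/
def HasToricDegree {n : ℕ} (φ : Fin n → ℂ) (r : ℕ) : Prop :=
  (∃ (α : Fin r → ℂ) (θ : Fin r → Fin n → ℤ), IsToricRep φ α θ) ∧
  ∀ s : ℕ, (∃ (α : Fin s → ℂ) (θ : Fin s → Fin n → ℤ), IsToricRep φ α θ) → r ≤ s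

/-- `α₁, …, α_r` are rationally independent together with `1`. -/
def RatIndepWithOne {r : ℕ} (α : Fin r → ℂ) : Prop :=
  ∀ (c0 : ℤ) (c : Fin r → ℤ), (c0 : ℂ) + ∑ k, (c k : ℂ) * α k = 0 → c0 = 0 ∧ ∀ k, c k = 0

/-- `α₁, …, α_r` are rationally independent. -/
def RatIndep {r : ℕ} (α : Fin r → ℂ) : Prop :=
  ∀ c : Fin r → ℤ, ∑ k, (c k : ℂ) * α k = 0 → ∀ k, c k = 0

/-- Additive resonances of `θ ∈ ℤ^n` relative to the `j`-th coordinate. -/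
def ResPlus {n : ℕ} (θ : Fin n → ℤ) (j : Fin n) : Set (Fin n → ℕ) :=
  {Q | 2 ≤ ∑ h, Q h ∧ ∑ h, (Q h : ℤ) * θ h = θ j}

/-- Multiplicative resonances of `[φ] ∈ (ℂ/ℤ)^n` relative to the `j`-th coordinate. -/
def ResMod {n : ℕ} (φ : Fin n → ℂ) (j : Fin n) : Set (Fin n → ℕ) :=
  {Q | 2 ≤ ∑ h, Q h ∧ ∃ m : ℤ, (∑ h, (Q h : ℂ) * φ h) - φ j = (m : ℂ)}

/-- If the toric coefficients of a minimal toric representation are rationally dependent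
with `1`, then `[φ]` admits a reduced toric representation. -/
lemma toric_congr {n r s : ℕ} {φ : Fin n → ℂ} {β : Fin r → ℂ} {η : Fin r → Fin n → ℤ}
    {β' : Fin s → ℂ} {η' : Fin s → Fin n → ℤ} (h : IsToricRep φ β η)
    (hid : ∀ i, ∃ M : ℤ, ∑ k, β' k * (η' k i : ℂ) = (∑ k, β k * (η k i : ℂ)) + M) :
    IsToricRep φ β' η' := by
  intro i
  obtain ⟨M0, hM0⟩ := h i
  obtain ⟨M, hM⟩ := hid i
  exact ⟨M0 - M, by rw [hM]; push_cast; rw [← hM0]; ring⟩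

lemma int_sign_mul_self {a : ℤ} (ha : a ≠ 0) : a.sign * a = a.natAbs := by
  rcases lt_trichotomy a 0 with h | h | h
  · rw [Int.sign_eq_neg_one_of_neg h]
    rw [Int.ofNat_natAbs_of_nonpos h.le]; ring
  · exact absurd h ha
  · rw [Int.sign_eq_one_of_pos h, Int.natAbs_of_nonneg h.le]; ring

theorem stmt6 (n r : ℕ) (hr : 0 < r) (φ : Fin n → ℂ) (hdeg : HasToricDegree φ r)
    (α : Fin r → ℂ) (θ : Fin r → Fin n → ℤ) (hrep : IsToricRep φ α θ)
    (hdep : ∃ (c : Fin r → ℤ) (c0 : ℤ), (¬ (c0 = 0 ∧ ∀ k, c k = 0)) ∧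
      ∑ k, (c k : ℂ) * α k = (c0 : ℂ)) :
    ∃ (β : Fin r → ℂ) (η : Fin r → Fin n → ℤ) (m : ℕ), 2 ≤ m ∧
      IsToricRep φ β η ∧
      β ⟨0, hr⟩ = 1 / (m : ℂ) ∧
      Nat.gcd m (Finset.univ.gcd fun j => (η ⟨0, hr⟩ j).natAbs) = 1 ∧
      (∀ (c0 : ℤ) (c : Fin r → ℤ), c ⟨0, hr⟩ = 0 →
        (c0 : ℂ) + ∑ k, (c k : ℂ) * β k = 0 → c0 = 0 ∧ ∀ k, c k = 0) := by
  obtain ⟨c, c0, hne, hsum⟩ := hdep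
  obtain ⟨r', rfl⟩ : ∃ r', r = r' + 1 := ⟨r - 1, (Nat.succ_pred_eq_of_pos hr).symm⟩
  -- find an index with nonzero coefficient
  have hjex : ∃ j, c j ≠ 0 := by
    by_contra h
    push_neg at h
    refine hne ⟨?_, h⟩
    have h0 : (c0 : ℂ) = 0 := by rw [← hsum]; simp [h]
    exact_mod_cast h0
  obtain ⟨j, hj⟩ := hjex
  have hdC : (c j : ℂ) ≠ 0 := Int.cast_ne_zero.mpr hj
  set t : Fin n → ℤ := fun i => c0 * θ j i with ht
  set A : ℕ := Finset.univ.gcd (fun i => (t i).natAbs) with hA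
  set G : ℕ := Nat.gcd (c j).natAbs A with hG
  have habs : 0 < (c j).natAbs := Int.natAbs_pos.mpr hj
  have hGpos : 0 < G := Nat.gcd_pos_of_pos_left _ habs
  have hGZ : (G : ℤ) ≠ 0 := Int.natCast_ne_zero.mpr hGpos.ne'
  have hGd : G ∣ (c j).natAbs := Nat.gcd_dvd_left _ _
  have hGtN : ∀ i, G ∣ (t i).natAbs := fun i =>
    (Nat.gcd_dvd_right _ _).trans (Finset.gcd_dvd (Finset.mem_univ i))
  have hGt : ∀ i, (G : ℤ) ∣ (c j).sign * t i := by
    intro i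
    refine Dvd.dvd.mul_left ?_ _
    exact (Int.natCast_dvd_natCast.mpr (hGtN i)).trans (Int.natAbs_dvd.mpr dvd_rfl)
  set m : ℕ := (c j).natAbs / G with hmdef
  set η0 : Fin n → ℤ := fun i => ((c j).sign * t i) / G with hη0def
  have hmG : G * m = (c j).natAbs := Nat.mul_div_cancel' hGd
  have hη0G : ∀ i, (G : ℤ) * η0 i = (c j).sign * t i := fun i => Int.mul_ediv_cancel' (hGt i)
  -- key integer identity
  have hkey : ∀ i, (η0 i) * (c j) = t i * m := by
    intro i
    apply mul_left_cancel₀ hGZ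
    have h3 : ((G : ℤ) * m) = ((c j).natAbs : ℤ) := by exact_mod_cast hmG
    calc (G : ℤ) * (η0 i * c j) = ((G : ℤ) * η0 i) * c j := by ring
      _ = ((c j).sign * t i) * c j := by rw [hη0G i]
      _ = t i * ((c j).sign * c j) := by ring
      _ = t i * ((c j).natAbs : ℤ) := by rw [int_sign_mul_self hj]
      _ = t i * ((G : ℤ) * m) := by rw [h3]
      _ = (G : ℤ) * (t i * m) := by ring
  have hm1 : 1 ≤ m := by
    rw [hmdef]
    exact Nat.one_le_div_iff hGpos |>.mpr (Nat.le_of_dvd habs hGd)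
  have hmC : (m : ℂ) ≠ 0 := Nat.cast_ne_zero.mpr (by omega)
  -- complex form of key identity
  have hC : ∀ i, (1 / (m : ℂ)) * (η0 i : ℂ) = (c0 : ℂ) * (θ j i : ℂ) / (c j : ℂ) := by
    intro i
    have := hkey i
    have hc : ((η0 i : ℂ)) * (c j : ℂ) = ((c0 : ℂ) * (θ j i : ℂ)) * (m : ℂ) := by
      exact_mod_cast congrArg (Int.cast : ℤ → ℂ) this
    field_simp
    linear_combination hc
  -- the representation for indices other than j
  set σ : Fin r' → Fin (r' + 1) := j.succAbove with hσ
  set β' : Fin r' → ℂ := fun k => α (σ k) / (c j) with hβ'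
  set η' : Fin r' → Fin n → ℤ := fun k i => c j * θ (σ k) i - c (σ k) * θ j i with hη'
  have hsum' : ∑ k : Fin r', (c (σ k) : ℂ) * α (σ k) = (c0 : ℂ) - (c j : ℂ) * α j := by
    have := Fin.sum_univ_succAbove (fun l => (c l : ℂ) * α l) j
    rw [hsum] at this
    rw [hσ]
    linear_combination -this
  have hsumid : ∀ i, (∑ k : Fin r', β' k * (η' k i : ℂ)) =
      (∑ l, α l * (θ l i : ℂ)) - (c0 : ℂ) * (θ j i : ℂ) / (c j : ℂ) := by
    intro i
    have hpt : ∀ k : Fin r', β' k * (η' k i : ℂ) =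
        α (σ k) * (θ (σ k) i : ℂ) - ((c (σ k) : ℂ) * α (σ k)) * ((θ j i : ℂ) / (c j : ℂ)) := by
      intro k
      rw [hβ', hη']
      push_cast
      field_simp
    rw [Finset.sum_congr rfl (fun k _ => hpt k), Finset.sum_sub_distrib, ← Finset.sum_mul,
      hsum', Fin.sum_univ_succAbove (fun l => α l * (θ l i : ℂ)) j]
    field_simp
    ring
  -- rule out m = 1
  have hm2 : 2 ≤ m := by
    rcases Nat.lt_or_ge m 2 with hlt | hge
    · exfalso
      have hmeq : m = 1 := by omega
      have hdvd : ∀ i, c j ∣ t i := by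
        intro i
        have hng : (c j).natAbs = G := by rw [← hmG, hmeq, Nat.mul_one]
        have h1 : (c j).natAbs ∣ (t i).natAbs := hng ▸ hGtN i
        exact Int.natAbs_dvd_natAbs.mp h1
      have hrep' : IsToricRep φ β' η' := by
        refine toric_congr hrep ?_
        intro i
        refine ⟨-(t i / c j), ?_⟩
        have hcast : ((t i / c j : ℤ) : ℂ) = (t i : ℂ) / (c j : ℂ) := Int.cast_div_charZero (hdvd i)
        have hti : ((t i : ℤ) : ℂ) = (c0 : ℂ) * (θ j i : ℂ) := by rw [ht]; push_cast; ring
        rw [hsumid i]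
        push_cast
        rw [hcast, hti]
        ring
      have := hdeg.2 r' ⟨β', η', hrep'⟩
      omega
    · exact hge
  -- the full representation
  set β : Fin (r' + 1) → ℂ := Fin.cons (1 / (m : ℂ)) β' with hβ
  set η : Fin (r' + 1) → Fin n → ℤ := Fin.cons η0 η' with hη
  have hidmain : ∀ i, ∑ k, β k * (η k i : ℂ) = ∑ l, α l * (θ l i : ℂ) := by
    intro i
    rw [Fin.sum_univ_succ]
    simp only [hβ, hη, Fin.cons_zero, Fin.cons_succ]
    rw [hC i, hsumid i]
    ring
  have hrepβ : IsToricRep φ β η :=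
    toric_congr hrep (fun i => ⟨0, by rw [hidmain i]; push_cast; ring⟩)
  have hzero : (⟨0, hr⟩ : Fin (r' + 1)) = 0 := rfl
  refine ⟨β, η, m, hm2, hrepβ, ?_, ?_, ?_⟩
  · rw [hzero, hβ, Fin.cons_zero]
  · -- gcd condition
    rw [hzero]
    set B : ℕ := Finset.univ.gcd (fun i => ((η 0 i).natAbs)) with hB
    set g' : ℕ := Nat.gcd m B with hg'
    have hη00 : ∀ i, η 0 i = η0 i := fun i => by rw [hη, Fin.cons_zero]
    have h1 : G * g' ∣ (c j).natAbs := by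
      calc G * g' ∣ G * m := Nat.mul_dvd_mul_left G (Nat.gcd_dvd_left _ _)
        _ = (c j).natAbs := hmG
    have h2 : ∀ i, G * g' ∣ (t i).natAbs := by
      intro i
      have hb : g' ∣ (η0 i).natAbs :=
        (Nat.gcd_dvd_right _ _).trans (Finset.gcd_dvd (Finset.mem_univ i))
      have : G * g' ∣ G * (η0 i).natAbs := Nat.mul_dvd_mul_left G hb
      have heq : G * (η0 i).natAbs = (t i).natAbs := by
        have := congrArg Int.natAbs (hη0G i)
        rwa [Int.natAbs_mul, Int.natAbs_mul, Int.natAbs_sign_of_ne_zero hj, one_mul,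
          Int.natAbs_natCast] at this
      rwa [heq] at this
    have h3 : G * g' ∣ G := by
      rw [hG]
      exact Nat.dvd_gcd h1 (Finset.dvd_gcd (fun i _ => h2 i))
    have : g' ∣ 1 := by
      have := Nat.le_of_dvd hGpos h3
      have h4 : g' = 0 → False := by
        intro h0
        rw [h0, Nat.mul_zero] at h3
        exact absurd (Nat.eq_zero_of_zero_dvd h3) hGpos.ne'
      refine Nat.dvd_one.mpr ?_
      nlinarith [Nat.pos_of_ne_zero h4]
    exact Nat.dvd_one.mp this
  · -- independence
    intro c0' e he0 hrel
    rw [hzero] at he0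
    have hallz : ∀ k : Fin r', e (Fin.succ k) = 0 := by
      by_contra hcon
      push_neg at hcon
      obtain ⟨k0, hk0⟩ := hcon
      haveI : NeZero r' := ⟨fun h => Fin.elim0 (h ▸ k0)⟩
      set J : Fin (r' + 1) := Fin.succ k0 with hJ
      have hzC : ((e J : ℤ) : ℂ) ≠ 0 := Int.cast_ne_zero.mpr hk0
      set β'' : Fin r' → ℂ := fun l => β (J.succAbove l) / (e J : ℂ) with hβ''
      set η'' : Fin r' → Fin n → ℤ := fun l i =>
        e J * η (J.succAbove l) i - e (J.succAbove l) * η J i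
          - (if l = 0 then (m : ℤ) * c0' * η J i else 0) with hη''
      have hJ0 : J.succAbove 0 = 0 := by simp [hJ]
      have hβ0 : β (J.succAbove 0) = 1 / (m : ℂ) := by rw [hJ0, hβ, Fin.cons_zero]
      have hidd : ∀ i, ∑ l, β'' l * (η'' l i : ℂ) = ∑ l, β l * (η l i : ℂ) := by
        intro i
        have hsplit : ∀ l : Fin r', β'' l * (η'' l i : ℂ) =
            ((e J : ℂ) * β (J.succAbove l) * (η (J.succAbove l) i : ℂ) / (e J : ℂ)
              - ((e (J.succAbove l) : ℂ) * β (J.succAbove l)) * ((η J i : ℂ) / (e J : ℂ)))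
            - (if l = 0 then (m : ℂ) * (c0' : ℂ) * (η J i : ℂ) * β (J.succAbove l) / (e J : ℂ)
                else 0) := by
          intro l
          by_cases hl : l = 0
          · rw [hβ'', hη'']
            simp only [hl, if_true]
            push_cast
            field_simp
          · rw [hβ'', hη'']
            simp only [hl, if_false]
            push_cast
            field_simp
            ring
        rw [Finset.sum_congr rfl (fun l _ => hsplit l), Finset.sum_sub_distrib,
          Finset.sum_sub_distrib,
          Finset.sum_ite_eq' Finset.univ (0 : Fin r')
            (fun l => (m : ℂ) * (c0' : ℂ) * (η J i : ℂ) * β (J.succAbove l) / (e J : ℂ))]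
        simp only [Finset.mem_univ, if_true, hβ0]
        have hs1 : ∑ l : Fin r', (e (J.succAbove l) : ℂ) * β (J.succAbove l)
            = -(c0' : ℂ) - (e J : ℂ) * β J := by
          have h := Fin.sum_univ_succAbove (fun l => (e l : ℂ) * β l) J
          rw [h] at hrel
          linear_combination hrel
        have hs2 : ∑ l, β l * (η l i : ℂ)
            = β J * (η J i : ℂ) + ∑ l : Fin r', β (J.succAbove l) * (η (J.succAbove l) i : ℂ) :=
          Fin.sum_univ_succAbove (fun l => β l * (η l i : ℂ)) J
        rw [hs2, ← Finset.sum_mul, hs1]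
        have : ∑ l : Fin r', (e J : ℂ) * β (J.succAbove l) * (η (J.succAbove l) i : ℂ) / (e J : ℂ)
            = ∑ l : Fin r', β (J.succAbove l) * (η (J.succAbove l) i : ℂ) := by
          refine Finset.sum_congr rfl (fun l _ => ?_)
          field_simp
        rw [this]
        field_simp
        ring
      have hrep'' : IsToricRep φ β'' η'' :=
        toric_congr hrepβ (fun i => ⟨0, by rw [hidd i]; push_cast; ring⟩)
      have := hdeg.2 r' ⟨β'', η'', hrep''⟩
      omega
    have hsz : ∑ k, (e k : ℂ) * β k = 0 := by
      rw [Fin.sum_univ_succ]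
      simp [hallz, he0]
    have hc0 : (c0' : ℂ) = 0 := by
      rw [hsz] at hrel
      simpa using hrel
    refine ⟨by exact_mod_cast hc0, ?_⟩
    intro k
    refine Fin.cases ?_ (fun k => hallz k) k
    exact he0
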